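/- For every real P > 0 there exist constants C₁, C₂ > 0 such that for all real numbers l, L, g with 0 < l ≤ P, 0 ≤ L ≤ P, g ≥ 0, and cosh(g) · sinh(l/2)² = cosh(L) + cosh(l/2)², one has C₁ ≤ exp(g) · l² ≤ C₂. -/

import Mathlib

/-- Right-angled hexagon estimate: for every `P > 0` there are constants
`C₁, C₂ > 0` such that whenever `0 < l ≤ P`, `0 ≤ L ≤ P`, `g ≥ 0` and
`cosh g * sinh (l/2) ^ 2 = cosh L + cosh (l/2) ^ 2`, one has
`C₁ ≤ exp g * l ^ 2 ≤ C₂`. -/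

private lemma sinh_le_mul_cosh {x : ℝ} (hx : 0 ≤ x) : Real.sinh x ≤ x * Real.cosh x := by
  have hd : ∀ y : ℝ, HasDerivAt (fun y => y * Real.cosh y - Real.sinh y) (y * Real.sinh y) y := by
    intro y
    have h := ((hasDerivAt_id y).mul (Real.hasDerivAt_cosh y)).sub (Real.hasDerivAt_sinh y)
    exact h.congr_deriv (by simp [id])
  have hmono : MonotoneOn (fun y => y * Real.cosh y - Real.sinh y) (Set.Ici 0) := by
    apply monotoneOn_of_deriv_nonneg (convex_Ici 0)
    · exact (Continuous.sub (continuous_id.mul Real.continuous_cosh) Real.continuous_sinh).continuousOn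
    · exact fun y _ => (hd y).differentiableAt.differentiableWithinAt
    · intro y hy
      rw [interior_Ici] at hy
      rw [(hd y).deriv]
      exact mul_nonneg hy.le (Real.sinh_nonneg_iff.mpr hy.le)
  have h0 := hmono (Set.self_mem_Ici) (Set.mem_Ici.mpr hx) hx
  simp at h0
  linarith

theorem hexagon_estimate (P : ℝ) (hP : 0 < P) :
    ∃ C₁ C₂ : ℝ, 0 < C₁ ∧ 0 < C₂ ∧
      ∀ l L g : ℝ, 0 < l → l ≤ P → 0 ≤ L → L ≤ P → 0 ≤ g →
        Real.cosh g * Real.sinh (l / 2) ^ 2 = Real.cosh L + Real.cosh (l / 2) ^ 2 →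
        C₁ ≤ Real.exp g * l ^ 2 ∧ Real.exp g * l ^ 2 ≤ C₂ := by
  have hcP : (0:ℝ) < Real.cosh (P/2) := Real.cosh_pos _
  refine ⟨8 / Real.cosh (P/2) ^ 2, 8 * (Real.cosh P + Real.cosh (P/2) ^ 2),
    by positivity, by positivity, ?_⟩
  intro l L g hl hlP hL hLP hg heq
  set s := Real.sinh (l/2) with hs
  have hl2 : 0 < l/2 := by linarith
  have hs1 : l/2 < s := Real.self_lt_sinh_iff.mpr hl2
  have hspos : 0 < s := lt_trans hl2 hs1
  have hs2 : s ≤ (l/2) * Real.cosh (l/2) := sinh_le_mul_cosh hl2.le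
  have hcmono : Real.cosh (l/2) ≤ Real.cosh (P/2) := by
    rw [Real.cosh_le_cosh]; rw [abs_of_pos hl2, abs_of_pos (by linarith : (0:ℝ) < P/2)]
    linarith
  have hs2' : s ≤ (l/2) * Real.cosh (P/2) := by nlinarith [hcP, hl2]
  -- K bounds
  have hK1 : (2:ℝ) ≤ Real.cosh L + Real.cosh (l/2) ^ 2 := by
    nlinarith [Real.one_le_cosh L, Real.one_le_cosh (l/2)]
  have hK2 : Real.cosh L + Real.cosh (l/2) ^ 2 ≤ Real.cosh P + Real.cosh (P/2) ^ 2 := by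
    have h1 : Real.cosh L ≤ Real.cosh P := by
      rw [Real.cosh_le_cosh, abs_of_nonneg hL, abs_of_pos hP]; exact hLP
    nlinarith [Real.cosh_pos (x := l/2)]
  -- exp g bounds via cosh g
  have hexp1 : Real.cosh g ≤ Real.exp g := by
    rw [Real.cosh_eq]
    have := Real.exp_le_exp.mpr (neg_nonpos_of_nonneg hg)
    have h1 : Real.exp (-g) ≤ Real.exp g := this.trans (Real.exp_le_exp.mpr hg)
    linarith
  have hexp2 : Real.exp g ≤ 2 * Real.cosh g := by
    rw [Real.cosh_eq]
    have := Real.exp_pos (-g)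
    linarith
  have hcg : Real.cosh g * s ^ 2 = Real.cosh L + Real.cosh (l/2) ^ 2 := heq
  constructor
  · -- lower bound
    rw [div_le_iff₀ (by positivity)]
    have key : 2 * l ^ 2 ≤ Real.cosh g * s ^ 2 * l ^ 2 := by
      nlinarith [sq_nonneg l]
    -- s^2 ≤ (l/2)^2 * cosh(P/2)^2
    have hsq : s ^ 2 ≤ (l/2) ^ 2 * Real.cosh (P/2) ^ 2 := by nlinarith
    have hcgpos : 0 < Real.cosh g := Real.cosh_pos _
    have e1 : Real.cosh g * s ^ 2 ≤ Real.cosh g * ((l/2) ^ 2 * Real.cosh (P/2) ^ 2) :=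
      mul_le_mul_of_nonneg_left hsq hcgpos.le
    have e2 : (2:ℝ) ≤ Real.cosh g * ((l/2) ^ 2 * Real.cosh (P/2) ^ 2) := by
      rw [hcg] at e1; linarith
    have e3 : Real.cosh g * ((l/2) ^ 2 * Real.cosh (P/2) ^ 2) ≤
        Real.exp g * ((l/2) ^ 2 * Real.cosh (P/2) ^ 2) :=
      mul_le_mul_of_nonneg_right hexp1 (by positivity)
    have e4 : Real.exp g * l ^ 2 * Real.cosh (P/2) ^ 2
        = 4 * (Real.exp g * ((l/2) ^ 2 * Real.cosh (P/2) ^ 2)) := by ring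
    linarith
  · -- upper bound
    have hsq : (l/2) ^ 2 ≤ s ^ 2 := by nlinarith
    have hcgpos : 0 < Real.cosh g := Real.cosh_pos _
    have h1 : Real.cosh g * (l/2) ^ 2 ≤ Real.cosh g * s ^ 2 :=
      mul_le_mul_of_nonneg_left hsq hcgpos.le
    have h2 : Real.cosh g * (l/2) ^ 2 ≤ Real.cosh P + Real.cosh (P/2) ^ 2 := by
      rw [hcg] at h1; linarith
    have h3 : Real.exp g * l ^ 2 ≤ 2 * Real.cosh g * l ^ 2 :=
      mul_le_mul_of_nonneg_right hexp2 (sq_nonneg l)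
    have h4 : 2 * Real.cosh g * l ^ 2 = 8 * (Real.cosh g * (l/2) ^ 2) := by ring
    have h5 : (8:ℝ) * (Real.cosh g * (l/2) ^ 2) ≤ 8 * (Real.cosh P + Real.cosh (P/2) ^ 2) :=
      mul_le_mul_of_nonneg_left h2 (by norm_num)
    linarith
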